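/- Let n ≥ 1 and 1 ≤ k ≤ n. Let L = ℂ[x₁^{±1},…,xₙ^{±1}] be the ring of Laurent polynomials in x₁,…,xₙ over ℂ, and let ψ : ℂ[𝐱,𝐲] → L be the ℂ-algebra homomorphism with ψ(x_i) = x_i and ψ(y_i) = x_i^{−1} for all i. For a partition λ of n, T ∈ Tab(λ) and S ∈ SYT(λ), let q = #{d ∈ Des(S) : d ≤ n−k} (the largest entry of ccTab′_μ(S)). Then in L: ψ(F_T^S) · (x₁x₂⋯xₙ)^q = F_T^S(𝐱), where F_T^S(𝐱) = ε_T(∏_{b∈λ} x_{T(b)}^{ccTab(S)(b)}) is the one-variable higher Specht polynomial of Ariki–Terasoma–Yamada, and ccTab(S) is the ordinary cocharge tableau of S, assigning to the cell of S containing j the value #{d ∈ Des(S) : d ≤ j−1}. -/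

import Mathlib

open MvPolynomial

noncomputable section

/-- The polynomial ring `ℂ[x₁,…,xₙ,y₁,…,yₙ]`; variable `Sum.inl i` is `xᵢ`,
variable `Sum.inr i` is `yᵢ`. -/
abbrev PolyXY (n : ℕ) : Type := MvPolynomial (Fin n ⊕ Fin n) ℂ

/-- The diagonal action of `π ∈ Sₙ`: `π · f = f(x_{π(1)},…,x_{π(n)},y_{π(1)},…,y_{π(n)})`. -/
def diagAct {n : ℕ} (π : Equiv.Perm (Fin n)) (f : PolyXY n) : PolyXY n :=
  rename (Sum.map ⇑π ⇑π) f
/-- The cells of a Young diagram (French notation: a cell `(r, c)` lies in row `r`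
counted from the bottom starting at `0`, and column `c` starting at `0`). -/
abbrev Cell (lam : YoungDiagram) : Type := {x // x ∈ lam.cells}

/-- A bijective filling of the cells of `lam` with the `n` values (value `j : Fin n`
represents the entry `j+1`). -/
abbrev Tab (lam : YoungDiagram) (n : ℕ) : Type := Cell lam ≃ Fin n

def cellRow {lam : YoungDiagram} (b : Cell lam) : ℕ := b.1.1

def cellCol {lam : YoungDiagram} (b : Cell lam) : ℕ := b.1.2

/-- A filling is standard if entries increase left to right along rows and increase
up columns. -/
def IsSYT {lam : YoungDiagram} {n : ℕ} (T : Tab lam n) : Prop :=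
  (∀ a b : Cell lam, cellRow a = cellRow b → cellCol a < cellCol b → T a < T b) ∧
  (∀ a b : Cell lam, cellCol a = cellCol b → cellRow a < cellRow b → T a < T b)

/-- The row group `R(T)`: permutations sending each entry of `T` to an entry in the
same row. -/
def rowGroup {lam : YoungDiagram} {n : ℕ} (T : Tab lam n) : Finset (Equiv.Perm (Fin n)) :=
  Finset.univ.filter fun π => ∀ b : Cell lam, cellRow (T.symm (π (T b))) = cellRow b

/-- The column group `C(T)`: permutations sending each entry of `T` to an entry in the
same column. -/
def colGroup {lam : YoungDiagram} {n : ℕ} (T : Tab lam n) : Finset (Equiv.Perm (Fin n)) :=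
  Finset.univ.filter fun π => ∀ b : Cell lam, cellCol (T.symm (π (T b))) = cellCol b

/-- The monomial `x_T^c y_T^d = ∏_{b ∈ λ} x_{T(b)}^{c(b)} y_{T(b)}^{d(b)}`. -/
def tabMonomial {lam : YoungDiagram} {n : ℕ} (T : Tab lam n) (c d : Cell lam → ℕ) :
    PolyXY n :=
  ∏ b : Cell lam, (X (Sum.inl (T b)) ^ c b * X (Sum.inr (T b)) ^ d b)

/-- The higher Specht polynomial `F_T^{c,d} = ε_T(x_T^c y_T^d)`, where
`ε_T = Σ_{τ∈C(T)} Σ_{σ∈R(T)} sgn(τ)·τσ`. -/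
def FTcd {lam : YoungDiagram} {n : ℕ} (T : Tab lam n) (c d : Cell lam → ℕ) : PolyXY n :=
  ∑ τ ∈ colGroup T, ∑ σ ∈ rowGroup T,
    ((Equiv.Perm.sign τ : ℤ) : ℂ) • diagAct (τ * σ) (tabMonomial T c d)
/-- The row (from the bottom, `0`-indexed) containing the `1`-indexed entry `j` of `S`. -/
def rowOfVal {lam : YoungDiagram} {n : ℕ} (S : Tab lam n) (j : ℕ) : ℕ :=
  if h : j - 1 < n then cellRow (S.symm ⟨j - 1, h⟩) else 0

/-- The descent set of `S` (1-indexed): those `d ∈ {1,…,n−1}` such that `d+1` lies in a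
strictly higher row of `S` than `d`. -/
def DesSet {lam : YoungDiagram} {n : ℕ} (S : Tab lam n) : Finset ℕ :=
  (Finset.Icc 1 (n - 1)).filter fun d => rowOfVal S d < rowOfVal S (d + 1)

/-- The `μ`-cocharge tableau for the hook `μ = (n−k+1,1^{k−1})`: its value on the cell of
`S` containing (1-indexed) `j` is `#{d ∈ Des(S) : n−k+1 ≤ d ≤ j−1}`.  Here the cell `b`
contains the 1-indexed entry `(S b : ℕ) + 1`. -/
def ccTabMu {lam : YoungDiagram} {n : ℕ} (k : ℕ) (S : Tab lam n) (b : Cell lam) : ℕ :=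
  ((DesSet S).filter fun d => n - k + 1 ≤ d ∧ d ≤ (S b : ℕ)).card

/-- The reverse `μ`-cocharge tableau: its value on the cell of `S` containing `j` is
`#{d ∈ Des(S) : j ≤ d ≤ n−k}`. -/
def ccTabMu' {lam : YoungDiagram} {n : ℕ} (k : ℕ) (S : Tab lam n) (b : Cell lam) : ℕ :=
  ((DesSet S).filter fun d => (S b : ℕ) + 1 ≤ d ∧ d ≤ n - k).card

/-- The higher Specht polynomial `F_T^S = ε_T(xy_T^S)` for the hook `μ = (n−k+1,1^{k−1})`. -/
def FTS {lam : YoungDiagram} {n : ℕ} (k : ℕ) (T S : Tab lam n) : PolyXY n :=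
  FTcd T (ccTabMu k S) (ccTabMu' k S)

/-- The Laurent polynomial ring `ℂ[x₁^{±1},…,xₙ^{±1}]`. -/
abbrev Laur (n : ℕ) : Type := AddMonoidAlgebra ℂ (Fin n → ℤ)

/-- The Laurent monomial `x₁^{m(1)} ⋯ xₙ^{m(n)}`. -/
def laurMon {n : ℕ} (m : Fin n → ℤ) : Laur n := AddMonoidAlgebra.single m 1

/-- The `ℂ`-algebra map `ψ : ℂ[𝐱,𝐲] → ℂ[x₁^{±1},…,xₙ^{±1}]`, `x_i ↦ x_i`,
`y_i ↦ x_i^{−1}`. -/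
def psiMap (n : ℕ) : PolyXY n →ₐ[ℂ] Laur n :=
  aeval (Sum.elim (fun i : Fin n => laurMon (Pi.single i (1 : ℤ)))
    (fun i : Fin n => laurMon (Pi.single i (-1 : ℤ))))

/-- The embedding `ℂ[x₁,…,xₙ] → ℂ[x₁^{±1},…,xₙ^{±1}]`. -/
def embX (n : ℕ) : MvPolynomial (Fin n) ℂ →ₐ[ℂ] Laur n :=
  aeval fun i : Fin n => laurMon (Pi.single i (1 : ℤ))

/-- The ordinary cocharge tableau of `S`: its value on the cell containing the
1-indexed entry `j` is `#{d ∈ Des(S) : d ≤ j−1}`. -/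
def ccTabOrd {lam : YoungDiagram} {n : ℕ} (S : Tab lam n) (b : Cell lam) : ℕ :=
  ((DesSet S).filter fun d => d ≤ (S b : ℕ)).card

/-- The one-variable higher Specht polynomial of Ariki–Terasoma–Yamada,
`F_T^S(𝐱) = ε_T(∏_b x_{T(b)}^{ccTab(S)(b)})`. -/
def FTSx {lam : YoungDiagram} {n : ℕ} (T S : Tab lam n) : MvPolynomial (Fin n) ℂ :=
  ∑ τ ∈ colGroup T, ∑ σ ∈ rowGroup T,
    ((Equiv.Perm.sign τ : ℤ) : ℂ) •
      rename (⇑(τ * σ)) (∏ b : Cell lam, X (T b) ^ ccTabOrd S b)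


lemma laurMon_add {n : ℕ} (a b : Fin n → ℤ) : laurMon (a + b) = laurMon a * laurMon b := by
  rw [laurMon, laurMon, laurMon, AddMonoidAlgebra.single_mul_single, one_mul]

lemma laurMon_zero {n : ℕ} : laurMon (0 : Fin n → ℤ) = 1 := rfl

lemma laurMon_pow {n : ℕ} (a : Fin n → ℤ) (e : ℕ) : laurMon a ^ e = laurMon (e • a) := by
  induction e with
  | zero => simp [laurMon_zero]
  | succ m ih => rw [pow_succ, ih, ← laurMon_add, succ_nsmul]

lemma laurMon_sum {n : ℕ} {α : Type*} (s : Finset α) (f : α → (Fin n → ℤ)) :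
    laurMon (∑ a ∈ s, f a) = ∏ a ∈ s, laurMon (f a) := by
  classical
  induction s using Finset.induction with
  | empty => simp [laurMon_zero]
  | insert _ _ h ih => rw [Finset.sum_insert h, Finset.prod_insert h, laurMon_add, ih]

lemma arithA (n k : ℕ) {lam : YoungDiagram} (S : Tab lam n) (b : Cell lam) :
    ccTabMu k S b + ((DesSet S).filter fun d => d ≤ n - k).card
      = ccTabOrd S b + ccTabMu' k S b := by
  classical
  simp only [ccTabMu, ccTabMu', ccTabOrd, Finset.card_filter]
  rw [← Finset.sum_add_distrib, ← Finset.sum_add_distrib]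
  refine Finset.sum_congr rfl fun d _ => ?_
  split_ifs <;> omega

lemma key_term (n k : ℕ) {lam : YoungDiagram} (T S : Tab lam n) (π : Equiv.Perm (Fin n)) :
    psiMap n (diagAct π (tabMonomial T (ccTabMu k S) (ccTabMu' k S))) *
        (∏ i : Fin n, laurMon (Pi.single i (1 : ℤ))) ^
          ((DesSet S).filter fun d => d ≤ n - k).card =
      embX n (rename (⇑π) (∏ b : Cell lam, X (T b) ^ ccTabOrd S b)) := by
  classical
  set q := ((DesSet S).filter fun d => d ≤ n - k).card with hq
  have hL : psiMap n (diagAct π (tabMonomial T (ccTabMu k S) (ccTabMu' k S))) =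
      laurMon (∑ b : Cell lam, (ccTabMu k S b • Pi.single (π (T b)) (1 : ℤ)
        + ccTabMu' k S b • Pi.single (π (T b)) (-1 : ℤ))) := by
    rw [laurMon_sum]
    simp only [psiMap, diagAct, tabMonomial, aeval_rename, map_prod, map_mul, map_pow,
      aeval_X, Function.comp_apply, Sum.map_inl, Sum.map_inr, Sum.elim_inl, Sum.elim_inr,
      laurMon_pow, laurMon_add]
  have hR : embX n (rename (⇑π) (∏ b : Cell lam, X (T b) ^ ccTabOrd S b)) =
      laurMon (∑ b : Cell lam, ccTabOrd S b • Pi.single (π (T b)) (1 : ℤ)) := by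
    rw [laurMon_sum]
    simp only [embX, aeval_rename, map_prod, map_pow, aeval_X, Function.comp_apply,
      laurMon_pow]
  have hP : (∏ i : Fin n, laurMon (Pi.single i (1 : ℤ))) ^ q =
      laurMon (∑ b : Cell lam, q • Pi.single (π (T b)) (1 : ℤ)) := by
    rw [← laurMon_sum, laurMon_pow, Finset.smul_sum, ← Equiv.sum_comp (T.trans π)
      (fun i => q • Pi.single i (1 : ℤ))]
    rfl
  rw [hL, hR, hP, ← laurMon_add, ← Finset.sum_add_distrib]
  congr 1
  refine Finset.sum_congr rfl fun b _ => ?_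
  have h := arithA n k S b
  funext j
  simp only [Pi.add_apply, Pi.smul_apply, Pi.single_apply]
  split_ifs <;> simp only [nsmul_eq_mul, smul_zero, mul_one, mul_neg, mul_zero] <;>
    push_cast <;> omega

/-- With `q = #{d ∈ Des(S) : d ≤ n−k}` (the largest entry of
`ccTab′_μ(S)`), `ψ(F_T^S) · (x₁⋯xₙ)^q = F_T^S(𝐱)` in the Laurent polynomial ring. -/
theorem stmt17 (n k : ℕ) (hn : 1 ≤ n) (hk1 : 1 ≤ k) (hkn : k ≤ n)
    (lam : YoungDiagram) (hlam : lam.card = n)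
    (T : Tab lam n) (S : Tab lam n) (hS : IsSYT S) :
    psiMap n (FTS k T S) *
        (∏ i : Fin n, laurMon (Pi.single i (1 : ℤ))) ^
          ((DesSet S).filter fun d => d ≤ n - k).card =
      embX n (FTSx T S) := by
  classical
  unfold FTS FTcd FTSx
  rw [map_sum, map_sum, Finset.sum_mul]
  refine Finset.sum_congr rfl fun tau _ => ?_
  rw [map_sum, map_sum, Finset.sum_mul]
  refine Finset.sum_congr rfl fun sigma _ => ?_
  rw [map_smul, map_smul, smul_mul_assoc]
  congr 1
  exact key_term n k T S (tau * sigma)
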